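/- Fix n \ge 2. For any positive integer k with k + 2^k - 1 \le n and any positive integer c with n - 2^k + 1 \le c \le (n - k - 2^k + 2)\,2^k - 1, there exists an arithmetical structure on K_n whose maximum value is c. -/

import Mathlib

/-- An arithmetical structure on `K n`. -/
def IsArithStruct (n : ℕ) (r : Fin n → ℕ) : Prop :=
  (∀ i, 0 < r i) ∧ Finset.univ.gcd r = 1 ∧ ∀ j, r j ∣ ∑ i, r i

lemma pow_list : ∀ (k r : ℕ), r < 2 ^ k → ∃ L : List ℕ,
    (∀ x ∈ L, x ∣ 2 ^ k ∧ 0 < x) ∧ L.sum = r ∧ L.length ≤ k := by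
  intro k
  induction k with
  | zero => intro r hr; interval_cases r; exact ⟨[], by simp⟩
  | succ k ih =>
    intro r hr
    have h2 : 2 ^ (k + 1) = 2 * 2 ^ k := by ring
    by_cases h : r < 2 ^ k
    · obtain ⟨L, hL1, hL2, hL3⟩ := ih r h
      exact ⟨L, fun x hx => ⟨(hL1 x hx).1.trans ⟨2, by ring⟩, (hL1 x hx).2⟩, hL2,
        hL3.trans (Nat.le_succ k)⟩
    · obtain ⟨L, hL1, hL2, hL3⟩ := ih (r - 2 ^ k) (by omega)
      refine ⟨2 ^ k :: L, ?_, ?_, ?_⟩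
      · intro x hx
        rcases List.mem_cons.mp hx with rfl | hx
        · exact ⟨⟨2, by ring⟩, Nat.pow_pos (by norm_num)⟩
        · exact ⟨(hL1 x hx).1.trans ⟨2, by ring⟩, (hL1 x hx).2⟩
      · rw [List.sum_cons, hL2]; omega
      · rw [List.length_cons]; omega

lemma pow_list' : ∀ (k r : ℕ), r + 2 ≤ 2 ^ k → ∃ L : List ℕ,
    (∀ x ∈ L, x ∣ 2 ^ k ∧ 0 < x) ∧ L.sum = r ∧ L.length + 1 ≤ k := by
  intro k
  induction k with
  | zero => intro r hr; simp at hr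
  | succ k ih =>
    intro r hr
    have h2 : 2 ^ (k + 1) = 2 * 2 ^ k := by ring
    by_cases h : r < 2 ^ k
    · obtain ⟨L, hL1, hL2, hL3⟩ := pow_list k r h
      exact ⟨L, fun x hx => ⟨(hL1 x hx).1.trans ⟨2, by ring⟩, (hL1 x hx).2⟩, hL2, by omega⟩
    · obtain ⟨L, hL1, hL2, hL3⟩ := ih (r - 2 ^ k) (by omega)
      refine ⟨2 ^ k :: L, ?_, ?_, ?_⟩
      · intro x hx
        rcases List.mem_cons.mp hx with rfl | hx
        · exact ⟨⟨2, by ring⟩, Nat.pow_pos (by norm_num)⟩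
        · exact ⟨(hL1 x hx).1.trans ⟨2, by ring⟩, (hL1 x hx).2⟩
      · rw [List.sum_cons, hL2]; omega
      · rw [List.length_cons]; omega

lemma split_list (k : ℕ) : ∀ (d : ℕ) (L : List ℕ),
    (∀ x ∈ L, x ∣ 2 ^ k ∧ 0 < x) → L.length + d ≤ L.sum →
    ∃ M : List ℕ, M.length = L.length + d ∧ M.sum = L.sum ∧ ∀ x ∈ M, x ∣ 2 ^ k ∧ 0 < x := by
  intro d
  induction d with
  | zero => intro L h _; exact ⟨L, by simp, rfl, h⟩
  | succ d ih =>
    intro L hL hsum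
    have hex : ∃ x ∈ L, 2 ≤ x := by
      by_contra hcon
      push_neg at hcon
      have h1 : L.sum ≤ L.length • 1 := List.sum_le_card_nsmul L 1 (fun x hx => by
        have := hcon x hx; omega)
      simp at h1; omega
    obtain ⟨x, hxL, hx2⟩ := hex
    obtain ⟨j, hjk, rfl⟩ := (Nat.dvd_prime_pow Nat.prime_two).mp (hL x hxL).1
    have hj : j ≠ 0 := by rintro rfl; simp at hx2
    obtain ⟨j, rfl⟩ : ∃ j', j = j' + 1 := ⟨j - 1, by omega⟩
    have hperm : L.Perm (2 ^ (j + 1) :: L.erase (2 ^ (j + 1))) := List.perm_cons_erase hxL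
    have hEsum : 2 ^ (j + 1) + (L.erase (2 ^ (j + 1))).sum = L.sum := by
      rw [hperm.sum_eq, List.sum_cons]
    have hElen : 1 + (L.erase (2 ^ (j + 1))).length = L.length := by
      rw [hperm.length_eq, List.length_cons]; omega
    have hprop : ∀ x ∈ (2 ^ j :: 2 ^ j :: L.erase (2 ^ (j + 1))), x ∣ 2 ^ k ∧ 0 < x := by
      have hdvd : (2 : ℕ) ^ j ∣ 2 ^ k := pow_dvd_pow 2 (by omega)
      intro x hx
      rcases List.mem_cons.mp hx with rfl | hx
      · exact ⟨hdvd, Nat.pow_pos (by norm_num)⟩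
      rcases List.mem_cons.mp hx with rfl | hx
      · exact ⟨hdvd, Nat.pow_pos (by norm_num)⟩
      · exact hL x (List.mem_of_mem_erase hx)
    have hp : 2 ^ (j + 1) = 2 ^ j + 2 ^ j := by ring
    obtain ⟨M, hM1, hM2, hM3⟩ := ih (2 ^ j :: 2 ^ j :: L.erase (2 ^ (j + 1))) hprop (by
      simp only [List.sum_cons, List.length_cons]; omega)
    simp only [List.sum_cons, List.length_cons] at hM1 hM2
    exact ⟨M, by omega, by omega, hM3⟩

lemma decomp (k ℓ c : ℕ) (hk : 0 < k) (hkℓ : k ≤ ℓ) (h1 : ℓ ≤ c)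
    (h2 : c + 1 ≤ (ℓ - k + 1) * 2 ^ k) :
    ∃ M : List ℕ, M.length = ℓ ∧ M.sum = c ∧ (∀ x ∈ M, x ∣ 2 ^ k ∧ 0 < x) ∧ 1 ∈ M := by
  have hP : 2 ≤ 2 ^ k := by
    calc 2 = 2 ^ 1 := rfl
    _ ≤ 2 ^ k := Nat.pow_le_pow_right (by norm_num) hk
  obtain ⟨d, hd⟩ : ∃ d, c - 1 = d := ⟨c - 1, rfl⟩
  obtain ⟨q, hq⟩ : ∃ q, d / 2 ^ k = q := ⟨_, rfl⟩
  obtain ⟨r, hr⟩ : ∃ r, d % 2 ^ k = r := ⟨_, rfl⟩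
  have hdr : 2 ^ k * q + r = d := by rw [← hq, ← hr]; exact Nat.div_add_mod d (2 ^ k)
  have hrlt : r < 2 ^ k := by rw [← hr]; exact Nat.mod_lt d (by omega)
  have hqle : q ≤ ℓ - k := by
    have hlt : d < (ℓ - k + 1) * 2 ^ k := by omega
    have : d / 2 ^ k < ℓ - k + 1 := (Nat.div_lt_iff_lt_mul (by omega : 0 < 2 ^ k)).mpr hlt
    omega
  have hR : ∃ R : List ℕ, (∀ x ∈ R, x ∣ 2 ^ k ∧ 0 < x) ∧ R.sum = r ∧ q + R.length + 1 ≤ ℓ := by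
    by_cases hcase : q + k < ℓ
    · obtain ⟨R, ha, hb, hc⟩ := pow_list k r hrlt
      exact ⟨R, ha, hb, by omega⟩
    · have hqe : ℓ - k = q := by omega
      have hre : r + 2 ≤ 2 ^ k := by
        have e1 : (ℓ - k + 1) * 2 ^ k = 2 ^ k * q + 2 ^ k := by rw [hqe]; ring
        omega
      obtain ⟨R, ha, hb, hc⟩ := pow_list' k r hre
      exact ⟨R, ha, hb, by omega⟩
  obtain ⟨R, hR1, hR2, hR3⟩ := hR
  have hlen : (List.replicate q (2 ^ k) ++ R).length = q + R.length := by simp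
  have hsum : (List.replicate q (2 ^ k) ++ R).sum = d := by
    rw [List.sum_append, List.sum_replicate, smul_eq_mul, hR2, mul_comm]; omega
  have hprop : ∀ x ∈ List.replicate q (2 ^ k) ++ R, x ∣ 2 ^ k ∧ 0 < x := by
    intro x hx
    rcases List.mem_append.mp hx with hx | hx
    · rw [List.eq_of_mem_replicate hx]; exact ⟨dvd_rfl, by omega⟩
    · exact hR1 x hx
  obtain ⟨M, hM1, hM2, hM3⟩ := split_list k (ℓ - 1 - (q + R.length))
    (List.replicate q (2 ^ k) ++ R) hprop (by rw [hlen, hsum]; omega)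
  rw [hlen] at hM1
  rw [hsum] at hM2
  refine ⟨1 :: M, ?_, ?_, ?_, List.mem_cons_self⟩
  · rw [List.length_cons]; omega
  · rw [List.sum_cons]; omega
  · intro x hx
    rcases List.mem_cons.mp hx with rfl | hx
    · exact ⟨one_dvd _, one_pos⟩
    · exact hM3 x hx

theorem stmt_6 (n k c : ℕ) (hn : 2 ≤ n) (hk : 0 < k)
    (hkn : k + 2 ^ k - 1 ≤ n) (hc : 0 < c)
    (hc1 : (n : ℤ) - 2 ^ k + 1 ≤ c)
    (hc2 : (c : ℤ) ≤ ((n : ℤ) - k - 2 ^ k + 2) * 2 ^ k - 1) :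
    ∃ r : Fin n → ℕ, IsArithStruct n r ∧ (∀ i, r i ≤ c) ∧ (∃ i, r i = c) := by
  have hP : 2 ≤ 2 ^ k := by
    calc 2 = 2 ^ 1 := rfl
    _ ≤ 2 ^ k := Nat.pow_le_pow_right (by norm_num) hk
  obtain ⟨ℓ, hℓ⟩ : ∃ ℓ, n + 1 - 2 ^ k = ℓ := ⟨_, rfl⟩
  have eP : ((2 ^ k : ℕ) : ℤ) = (2 : ℤ) ^ k := by push_cast; ring
  rw [← eP] at hc1 hc2
  have hkℓ : k ≤ ℓ := by omega
  have h1 : ℓ ≤ c := by omega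
  have h2 : c + 1 ≤ (ℓ - k + 1) * 2 ^ k := by
    have e2 : ((ℓ - k + 1 : ℕ) : ℤ) = (n : ℤ) - k - ((2 ^ k : ℕ) : ℤ) + 2 := by
      push_cast; omega
    have h3 : (c : ℤ) + 1 ≤ (((ℓ - k + 1) * 2 ^ k : ℕ) : ℤ) := by
      push_cast [Nat.cast_mul] at *
      rw [e2] at *
      linarith
    exact_mod_cast h3
  obtain ⟨M, hM1, hM2, hM3, hM4⟩ := decomp k ℓ c hk hkℓ h1 h2
  have hlen : (List.replicate (2 ^ k - 1) c ++ M).length = n := by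
    rw [List.length_append, List.length_replicate, hM1]; omega
  set L0 : List ℕ := List.replicate (2 ^ k - 1) c ++ M with hL0
  have hsum : L0.sum = 2 ^ k * c := by
    rw [hL0, List.sum_append, List.sum_replicate, smul_eq_mul, hM2]
    have : (2 ^ k - 1) * c + c = (2 ^ k - 1 + 1) * c := by ring
    rw [this]
    congr 1
    omega
  have hmem : ∀ x ∈ L0, x ∣ 2 ^ k * c ∧ 0 < x ∧ x ≤ c := by
    intro x hx
    rcases List.mem_append.mp hx with hx | hx
    · rw [List.eq_of_mem_replicate hx]
      exact ⟨dvd_mul_left c (2 ^ k), hc, le_rfl⟩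
    · refine ⟨dvd_mul_of_dvd_left (hM3 x hx).1 c, (hM3 x hx).2, ?_⟩
      rw [← hM2]
      exact List.le_sum_of_mem hx
  subst hlen
  refine ⟨L0.get, ⟨?_, ?_, ?_⟩, ?_, ?_⟩
  · intro i
    exact (hmem _ (L0.get_mem i)).2.1
  · have h1M : (1 : ℕ) ∈ L0 := List.mem_append.mpr (Or.inr hM4)
    obtain ⟨i, hi⟩ := List.mem_iff_get.mp h1M
    have : Finset.univ.gcd L0.get ∣ 1 := hi ▸ Finset.gcd_dvd (Finset.mem_univ i)
    exact Nat.dvd_one.mp this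
  · intro j
    have := (hmem _ (L0.get_mem j)).1
    have hs : ∑ i, L0.get i = L0.sum := by
      conv_rhs => rw [← List.ofFn_get L0]
      rw [List.sum_ofFn]
    rw [hs, hsum]
    exact this
  · intro i
    exact (hmem _ (L0.get_mem i)).2.2
  · have hcM : c ∈ L0 :=
      List.mem_append.mpr (Or.inl (List.mem_replicate.mpr ⟨by omega, rfl⟩))
    obtain ⟨i, hi⟩ := List.mem_iff_get.mp hcM
    exact ⟨i, hi⟩
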